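/- Let N be a function on pairs (d, e) of natural numbers with d + e ≥ 1 satisfying Kontsevich's recursion for ℙ¹×ℙ¹ with N(1,0) = N(0,1) = 1. Define the multivariate formal power series Γ in three variables x₁, x₂, x₃ over ℚ whose coefficient of x₁^a x₂^b x₃^c is ∑ N(d,e)·e^a·d^b / (a!·b!·c!), the sum ranging over the (finitely many) pairs (d,e) with d+e ≥ 1 and 2(d+e)−1 = c (so that Γ = ∑_{d+e≥1} N(d,e)·x₃^{2(d+e)−1}/(2(d+e)−1)!·exp(e·x₁ + d·x₂)), and let Γ_{ijk} denote the third formal partial derivatives ∂³Γ/∂x_i∂x_j∂x_k. Then the WDVV equation holds: Γ₃₃₃ + Γ₁₁₂·Γ₂₃₃ + Γ₁₂₂·Γ₁₃₃ = Γ₁₂₃·Γ₁₂₃ + Γ₂₂₃·Γ₁₁₃. -/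

import Mathlib

open Finset

/-- A function `N : ℕ → ℕ → ℚ` (defined on bidegrees `(d,e)`) satisfies Kontsevich's
recursion for `ℙ¹×ℙ¹` if `N 1 0 = N 0 1 = 1` and, for every `(d,e)` with `d + e ≥ 2`,
`N(d,e) + ∑ C(2d+2e−4, 2dA+2eA−1)·dA·eA·(dA·eB + eA·dB)·N(dA,eA)·N(dB,eB)
       = ∑ C(2d+2e−4, 2dA+2eA−2)·dA·eB·(dA·eB + eA·dB)·N(dA,eA)·N(dB,eB)`,
both sums over decompositions `d = dA + dB`, `e = eA + eB` with `dA+eA ≥ 1`, `dB+eB ≥ 1`. -/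
def KontsevichRecursionP1xP1 (N : ℕ → ℕ → ℚ) : Prop :=
  N 1 0 = 1 ∧ N 0 1 = 1 ∧
  ∀ d e : ℕ, 2 ≤ d + e →
    N d e + ∑ p ∈ ((Finset.range (d + 1)) ×ˢ (Finset.range (e + 1))).filter
        (fun p => 1 ≤ p.1 + p.2 ∧ 1 ≤ (d - p.1) + (e - p.2)),
      ((2 * d + 2 * e - 4).choose (2 * p.1 + 2 * p.2 - 1) : ℚ) * (p.1 : ℚ) * (p.2 : ℚ) *
        ((p.1 : ℚ) * ((e - p.2 : ℕ) : ℚ) + (p.2 : ℚ) * ((d - p.1 : ℕ) : ℚ)) *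
        N p.1 p.2 * N (d - p.1) (e - p.2)
    = ∑ p ∈ ((Finset.range (d + 1)) ×ˢ (Finset.range (e + 1))).filter
        (fun p => 1 ≤ p.1 + p.2 ∧ 1 ≤ (d - p.1) + (e - p.2)),
      ((2 * d + 2 * e - 4).choose (2 * p.1 + 2 * p.2 - 2) : ℚ) * (p.1 : ℚ) * ((e - p.2 : ℕ) : ℚ) *
        ((p.1 : ℚ) * ((e - p.2 : ℕ) : ℚ) + (p.2 : ℚ) * ((d - p.1 : ℕ) : ℚ)) *
        N p.1 p.2 * N (d - p.1) (e - p.2)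

/-- Formal partial derivative of a multivariate formal power series in three variables
with respect to the `i`-th variable. -/
noncomputable def mvPDeriv (i : Fin 3) (f : MvPowerSeries (Fin 3) ℚ) :
    MvPowerSeries (Fin 3) ℚ :=
  fun m => ((m i + 1 : ℕ) : ℚ) *
    MvPowerSeries.coeff (m + Finsupp.single i 1) f

/-- The quantum part of the Gromov–Witten potential of `ℙ¹×ℙ¹`:
`Γ = ∑_{d+e≥1} N(d,e)·x₃^{2(d+e)−1}/(2(d+e)−1)!·exp(e·x₁ + d·x₂)`, i.e. the coefficient
of `x₁^a x₂^b x₃^c` is `∑ N(d,e)·e^a·d^b/(a!·b!·c!)`, the sum over the pairs `(d,e)`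
with `d+e ≥ 1` and `2(d+e)−1 = c`. -/
noncomputable def GammaP1xP1 (N : ℕ → ℕ → ℚ) : MvPowerSeries (Fin 3) ℚ :=
  fun m => ∑ p ∈ ((Finset.range (m 2 + 2)) ×ˢ (Finset.range (m 2 + 2))).filter
      (fun p => 1 ≤ p.1 + p.2 ∧ 2 * (p.1 + p.2) - 1 = m 2),
    N p.1 p.2 * (p.2 : ℚ) ^ (m 0) * (p.1 : ℚ) ^ (m 1) /
      ((Nat.factorial (m 0) : ℚ) * (Nat.factorial (m 1) : ℚ) * (Nat.factorial (m 2) : ℚ))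

def gg (N : ℕ → ℕ → ℚ) (a b c : ℕ) : ℚ :=
  ∑ p ∈ ((Finset.range (c + 2)) ×ˢ (Finset.range (c + 2))).filter
      (fun p => 1 ≤ p.1 + p.2 ∧ 2 * (p.1 + p.2) - 1 = c),
    N p.1 p.2 * (p.2 : ℚ) ^ a * (p.1 : ℚ) ^ b

lemma coeff_Gamma (N : ℕ → ℕ → ℚ) (m : Fin 3 →₀ ℕ) :
    MvPowerSeries.coeff m (GammaP1xP1 N)
    = gg N (m 0) (m 1) (m 2) /
      ((Nat.factorial (m 0) : ℚ) * (Nat.factorial (m 1) : ℚ) * (Nat.factorial (m 2) : ℚ)) := by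
  show GammaP1xP1 N m = _
  rw [GammaP1xP1, gg, Finset.sum_div]

lemma coeff_D (i : Fin 3) (f : MvPowerSeries (Fin 3) ℚ) (m : Fin 3 →₀ ℕ) :
    MvPowerSeries.coeff m (mvPDeriv i f)
    = ((m i + 1 : ℕ) : ℚ) * MvPowerSeries.coeff (m + Finsupp.single i 1) f := rfl

lemma fact1 (n : ℕ) : (n+1).factorial = (n+1) * n.factorial := rfl
lemma fact2 (n : ℕ) : (n+2).factorial = (n+2)*((n+1) * n.factorial) := rfl
lemma fact3 (n : ℕ) : (n+3).factorial = (n+3)*((n+2)*((n+1) * n.factorial)) := rfl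

lemma keyDiv (a b c x F F' : ℚ) (hF : F ≠ 0) (hF' : F' ≠ 0) (h : a*b*c*F = F') :
    a * (b * (c * (x / F'))) = x / F := by
  field_simp
  linear_combination x * h

set_option maxHeartbeats 1000000 in
lemma coeff_D3 (N : ℕ → ℕ → ℚ) (i j k : Fin 3) (m : Fin 3 →₀ ℕ) :
    MvPowerSeries.coeff m (mvPDeriv i (mvPDeriv j (mvPDeriv k (GammaP1xP1 N))))
    = gg N (m 0 + (Finsupp.single i 1 + Finsupp.single j 1 + Finsupp.single k 1 : Fin 3 →₀ ℕ) 0)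
        (m 1 + (Finsupp.single i 1 + Finsupp.single j 1 + Finsupp.single k 1 : Fin 3 →₀ ℕ) 1)
        (m 2 + (Finsupp.single i 1 + Finsupp.single j 1 + Finsupp.single k 1 : Fin 3 →₀ ℕ) 2) /
      ((Nat.factorial (m 0) : ℚ) * (Nat.factorial (m 1) : ℚ) * (Nat.factorial (m 2) : ℚ)) := by
  rw [coeff_D, coeff_D, coeff_D, coeff_Gamma]
  have hadd : m + Finsupp.single i 1 + Finsupp.single j 1 + Finsupp.single k 1
      = m + (Finsupp.single i 1 + Finsupp.single j 1 + Finsupp.single k 1) := by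
    abel
  rw [hadd]
  simp only [Finsupp.add_apply]
  refine keyDiv _ _ _ _ _ _ ?_ ?_ ?_
  · have h0 := (m 0).factorial_pos
    have h1 := (m 1).factorial_pos
    have h2 := (m 2).factorial_pos
    push_cast
    positivity
  · have h0 := (m 0 + (Finsupp.single i 1 + Finsupp.single j 1 + Finsupp.single k 1 : Fin 3 →₀ ℕ) 0).factorial_pos
    have h1 := (m 1 + (Finsupp.single i 1 + Finsupp.single j 1 + Finsupp.single k 1 : Fin 3 →₀ ℕ) 1).factorial_pos
    have h2 := (m 2 + (Finsupp.single i 1 + Finsupp.single j 1 + Finsupp.single k 1 : Fin 3 →₀ ℕ) 2).factorial_pos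
    simp only [Finsupp.add_apply] at *
    push_cast
    positivity
  · fin_cases i <;> fin_cases j <;> fin_cases k <;>
      · simp only [Finsupp.add_apply, Finsupp.single_apply]
        norm_num
        push_cast [fact1, fact2, fact3, Nat.add_zero]
        ring

def SS (c : ℕ) : Finset ((ℕ × ℕ) × (ℕ × ℕ)) :=
  (((range (c+4)) ×ˢ (range (c+4))) ×ˢ ((range (c+4)) ×ˢ (range (c+4)))).filter
    (fun q => 1 ≤ q.1.1 + q.1.2 ∧ 1 ≤ q.2.1 + q.2.2 ∧
      2 * ((q.1.1 + q.1.2) + (q.2.1 + q.2.2)) - 4 = c)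


lemma gg_eq (N : ℕ → ℕ → ℚ) (α β w c : ℕ) (hw : w + 2 ≤ c + 4) :
    gg N α β w = ∑ A ∈ (range (c+4)) ×ˢ (range (c+4)),
      if 1 ≤ A.1 + A.2 ∧ 2 * (A.1 + A.2) - 1 = w then
        N A.1 A.2 * (A.2:ℚ)^α * (A.1:ℚ)^β else 0 := by
  rw [gg, Finset.sum_filter]
  apply Finset.sum_subset
  · apply Finset.product_subset_product <;> · apply Finset.range_subset_range.2; omega
  · intro A hA hnA
    rw [if_neg]
    intro hcond
    apply hnA
    simp only [mem_product, mem_range] at *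
    omega

lemma mul_ite_zero' (p q : Prop) [Decidable p] [Decidable q] (u v : ℚ) :
    (if p then u else 0) * (if q then v else 0) = if p ∧ q then u * v else 0 := by
  split_ifs <;> simp_all

lemma xsum (a s t : ℕ) (u v : ℚ) :
    ∑ x ∈ range (a+1), (a.choose x : ℚ) * (u^(x+s) * v^((a-x)+t))
    = u^s * v^t * (u+v)^a := by
  rw [add_pow, Finset.mul_sum]
  apply Finset.sum_congr rfl
  intro x hx
  rw [pow_add, pow_add]
  ring

lemma zsum (c s2 t2 nA nB : ℕ) (hs : s2 ≤ 1) (hst : s2 + t2 = 2) :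
    ∑ z ∈ range (c+1),
      (if (1 ≤ nA ∧ 2*nA - 1 = z + s2) ∧ (1 ≤ nB ∧ 2*nB - 1 = (c - z) + t2)
        then (c.choose z : ℚ) else 0)
    = if 1 ≤ nA ∧ 1 ≤ nB ∧ 2*(nA+nB) - 4 = c then (c.choose (2*nA - 1 - s2) : ℚ) else 0 := by
  by_cases H : 1 ≤ nA ∧ 1 ≤ nB ∧ 2*(nA+nB) - 4 = c
  · rw [if_pos H]
    obtain ⟨h1, h2, h3⟩ := H
    by_cases hk : 2*nA - 1 - s2 ≤ c
    · rw [Finset.sum_eq_single (2*nA - 1 - s2)]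
      · rw [if_pos (by omega)]
      · intro z hz hne
        rw [if_neg]
        rintro ⟨⟨_, hA2⟩, _⟩
        exact hne (by omega)
      · intro hmem
        exact absurd (Finset.mem_range.2 (by omega)) hmem
    · rw [Nat.choose_eq_zero_of_lt (by omega), Nat.cast_zero]
      apply Finset.sum_eq_zero
      intro z hz
      rw [Finset.mem_range] at hz
      rw [if_neg]
      rintro ⟨⟨_, hA2⟩, _⟩
      omega
  · rw [if_neg H]
    apply Finset.sum_eq_zero
    intro z hz
    rw [Finset.mem_range] at hz
    rw [if_neg]
    rintro ⟨⟨hA1, hA2⟩, ⟨hB1, hB2⟩⟩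
    exact H (by omega)

lemma sum_comm3 {α β γ : Type*} (sx : Finset α) (sy : Finset β) (sz : Finset γ)
    (F : α → β → γ → ℚ) :
    ∑ x ∈ sx, ∑ y ∈ sy, ∑ z ∈ sz, F x y z = ∑ z ∈ sz, ∑ y ∈ sy, ∑ x ∈ sx, F x y z :=
  calc ∑ x ∈ sx, ∑ y ∈ sy, ∑ z ∈ sz, F x y z
      = ∑ y ∈ sy, ∑ x ∈ sx, ∑ z ∈ sz, F x y z := Finset.sum_comm
    _ = ∑ y ∈ sy, ∑ z ∈ sz, ∑ x ∈ sx, F x y z :=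
        Finset.sum_congr rfl (fun y _ => Finset.sum_comm)
    _ = ∑ z ∈ sz, ∑ y ∈ sy, ∑ x ∈ sx, F x y z := Finset.sum_comm

lemma sum_factor3 (sx sy sz : Finset ℕ) (f g h : ℕ → ℚ) :
    ∑ x ∈ sx, ∑ y ∈ sy, ∑ z ∈ sz, f x * g y * h z
    = (∑ x ∈ sx, f x) * (∑ y ∈ sy, g y) * (∑ z ∈ sz, h z) := by
  simp only [Finset.sum_mul, Finset.mul_sum]
  rw [sum_comm3]

lemma termfac (a b c x y z : ℕ) (hx : x ≤ a) (hy : y ≤ b) (hz : z ≤ c) (u v : ℚ) :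
    (a.factorial : ℚ) * (b.factorial : ℚ) * (c.factorial : ℚ) *
      ((u / ((x.factorial : ℚ) * (y.factorial : ℚ) * (z.factorial : ℚ))) *
       (v / (((a-x).factorial : ℚ) * ((b-y).factorial : ℚ) * ((c-z).factorial : ℚ))))
    = (a.choose x : ℚ) * (b.choose y : ℚ) * (c.choose z : ℚ) * (u * v) := by
  have ha : ((a.choose x : ℚ)) * (x.factorial : ℚ) * ((a-x).factorial : ℚ) = (a.factorial : ℚ) := by
    exact_mod_cast congrArg (Nat.cast (R := ℚ)) (Nat.choose_mul_factorial_mul_factorial hx)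
  have hb : ((b.choose y : ℚ)) * (y.factorial : ℚ) * ((b-y).factorial : ℚ) = (b.factorial : ℚ) := by
    exact_mod_cast congrArg (Nat.cast (R := ℚ)) (Nat.choose_mul_factorial_mul_factorial hy)
  have hc : ((c.choose z : ℚ)) * (z.factorial : ℚ) * ((c-z).factorial : ℚ) = (c.factorial : ℚ) := by
    exact_mod_cast congrArg (Nat.cast (R := ℚ)) (Nat.choose_mul_factorial_mul_factorial hz)
  rw [← ha, ← hb, ← hc]
  have n1 : (x.factorial : ℚ) ≠ 0 := Nat.cast_ne_zero.2 x.factorial_ne_zero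
  have n2 : (y.factorial : ℚ) ≠ 0 := Nat.cast_ne_zero.2 y.factorial_ne_zero
  have n3 : (z.factorial : ℚ) ≠ 0 := Nat.cast_ne_zero.2 z.factorial_ne_zero
  have n4 : ((a-x).factorial : ℚ) ≠ 0 := Nat.cast_ne_zero.2 (a-x).factorial_ne_zero
  have n5 : ((b-y).factorial : ℚ) ≠ 0 := Nat.cast_ne_zero.2 (b-y).factorial_ne_zero
  have n6 : ((c-z).factorial : ℚ) ≠ 0 := Nat.cast_ne_zero.2 (c-z).factorial_ne_zero
  field_simp

/-- build a Finsupp on Fin 3 from a triple -/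
noncomputable def f3 (q : ℕ × ℕ × ℕ) : Fin 3 →₀ ℕ :=
  Finsupp.single 0 q.1 + Finsupp.single 1 q.2.1 + Finsupp.single 2 q.2.2

lemma f3_0 (q : ℕ × ℕ × ℕ) : f3 q 0 = q.1 := by simp [f3, Finsupp.single_apply]
lemma f3_1 (q : ℕ × ℕ × ℕ) : f3 q 1 = q.2.1 := by simp [f3, Finsupp.single_apply]
lemma f3_2 (q : ℕ × ℕ × ℕ) : f3 q 2 = q.2.2 := by simp [f3, Finsupp.single_apply]

lemma split3 (m : Fin 3 →₀ ℕ) (F : ℕ → ℕ → ℕ → ℕ → ℕ → ℕ → ℚ) :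
    ∑ p ∈ Finset.HasAntidiagonal.antidiagonal m, F (p.1 0) (p.1 1) (p.1 2) (p.2 0) (p.2 1) (p.2 2)
    = ∑ q ∈ range (m 0 + 1) ×ˢ (range (m 1 + 1) ×ˢ range (m 2 + 1)),
        F q.1 q.2.1 q.2.2 (m 0 - q.1) (m 1 - q.2.1) (m 2 - q.2.2) := by
  apply Finset.sum_nbij' (i := fun p => (p.1 0, p.1 1, p.1 2))
    (j := fun q => (f3 q, m - f3 q))
  · intro p hp
    rw [Finset.HasAntidiagonal.mem_antidiagonal] at hp
    have h0 : p.1 0 + p.2 0 = m 0 := by rw [← hp]; simp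
    have h1 : p.1 1 + p.2 1 = m 1 := by rw [← hp]; simp
    have h2 : p.1 2 + p.2 2 = m 2 := by rw [← hp]; simp
    simp only [mem_product, mem_range]
    omega
  · intro q hq
    simp only [mem_product, mem_range] at hq
    rw [Finset.HasAntidiagonal.mem_antidiagonal]
    have hle : f3 q ≤ m := by
      intro i
      fin_cases i <;> simp [f3_0, f3_1, f3_2] <;> omega
    ext i
    have := hle i
    simp [Finsupp.tsub_apply]
    omega
  · intro p hp
    rw [Finset.HasAntidiagonal.mem_antidiagonal] at hp
    have key : f3 (p.1 0, p.1 1, p.1 2) = p.1 := by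
      ext i; fin_cases i <;> simp [f3_0, f3_1, f3_2]
    rw [key]
    have : m - p.1 = p.2 := by
      ext i
      have : p.1 i + p.2 i = m i := by rw [← hp]; simp
      simp [Finsupp.tsub_apply]; omega
    rw [this]
  · intro q hq
    simp only [mem_product, mem_range] at hq
    simp [Prod.ext_iff, f3_0, f3_1, f3_2]
  · intro p hp
    rw [Finset.HasAntidiagonal.mem_antidiagonal] at hp
    have h0 : p.1 0 + p.2 0 = m 0 := by rw [← hp]; simp
    have h1 : p.1 1 + p.2 1 = m 1 := by rw [← hp]; simp
    have h2 : p.1 2 + p.2 2 = m 2 := by rw [← hp]; simp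
    have e0 : m 0 - p.1 0 = p.2 0 := by omega
    have e1 : m 1 - p.1 1 = p.2 1 := by omega
    have e2 : m 2 - p.1 2 = p.2 2 := by omega
    simp only [e0, e1, e2]

set_option maxHeartbeats 2000000 in
lemma P_eq (N : ℕ → ℕ → ℚ) (m : Fin 3 →₀ ℕ) (s0 s1 s2 t0 t1 t2 : ℕ)
    (hs2 : s2 ≤ 1) (hst : s2 + t2 = 2) :
    ((m 0).factorial : ℚ) * ((m 1).factorial : ℚ) * ((m 2).factorial : ℚ) *
      ∑ p ∈ Finset.HasAntidiagonal.antidiagonal m,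
        (gg N (p.1 0 + s0) (p.1 1 + s1) (p.1 2 + s2) /
          (((p.1 0).factorial : ℚ) * ((p.1 1).factorial : ℚ) * ((p.1 2).factorial : ℚ))) *
        (gg N (p.2 0 + t0) (p.2 1 + t1) (p.2 2 + t2) /
          (((p.2 0).factorial : ℚ) * ((p.2 1).factorial : ℚ) * ((p.2 2).factorial : ℚ)))
    = ∑ q ∈ SS (m 2),
        ((m 2).choose (2*(q.1.1+q.1.2) - 1 - s2) : ℚ) * N q.1.1 q.1.2 * N q.2.1 q.2.2 *
        (q.1.2:ℚ)^s0 * (q.1.1:ℚ)^s1 * (q.2.2:ℚ)^t0 * (q.2.1:ℚ)^t1 *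
        ((q.1.2:ℚ) + (q.2.2:ℚ))^(m 0) * ((q.1.1:ℚ) + (q.2.1:ℚ))^(m 1) := by
  have hsplit := split3 m (fun x y z x' y' z' =>
    (gg N (x + s0) (y + s1) (z + s2) /
      ((x.factorial : ℚ) * (y.factorial : ℚ) * (z.factorial : ℚ))) *
    (gg N (x' + t0) (y' + t1) (z' + t2) /
      ((x'.factorial : ℚ) * (y'.factorial : ℚ) * (z'.factorial : ℚ))))
  rw [hsplit, Finset.mul_sum]
  have step1 : ∀ q ∈ (range (m 0 + 1) ×ˢ (range (m 1 + 1) ×ˢ range (m 2 + 1))),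
      ((m 0).factorial : ℚ) * ((m 1).factorial : ℚ) * ((m 2).factorial : ℚ) *
        ((gg N (q.1 + s0) (q.2.1 + s1) (q.2.2 + s2) /
          ((q.1.factorial : ℚ) * (q.2.1.factorial : ℚ) * (q.2.2.factorial : ℚ))) *
        (gg N ((m 0 - q.1) + t0) ((m 1 - q.2.1) + t1) ((m 2 - q.2.2) + t2) /
          (((m 0 - q.1).factorial : ℚ) * ((m 1 - q.2.1).factorial : ℚ) * ((m 2 - q.2.2).factorial : ℚ))))
      = ∑ A ∈ (range (m 2 + 4)) ×ˢ (range (m 2 + 4)), ∑ B ∈ (range (m 2 + 4)) ×ˢ (range (m 2 + 4)),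
          ((m 0).choose q.1 : ℚ) * ((m 1).choose q.2.1 : ℚ) * ((m 2).choose q.2.2 : ℚ) *
          ((if 1 ≤ A.1 + A.2 ∧ 2 * (A.1 + A.2) - 1 = q.2.2 + s2 then
              N A.1 A.2 * (A.2:ℚ)^(q.1 + s0) * (A.1:ℚ)^(q.2.1 + s1) else 0) *
           (if 1 ≤ B.1 + B.2 ∧ 2 * (B.1 + B.2) - 1 = (m 2 - q.2.2) + t2 then
              N B.1 B.2 * (B.2:ℚ)^((m 0 - q.1) + t0) * (B.1:ℚ)^((m 1 - q.2.1) + t1) else 0))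
      := by
    intro q hq
    simp only [mem_product, mem_range] at hq
    obtain ⟨hx, hy, hz⟩ := hq
    rw [gg_eq N _ _ (q.2.2 + s2) (m 2) (by omega), gg_eq N _ _ ((m 2 - q.2.2) + t2) (m 2) (by omega),
      termfac _ _ _ _ _ _ (by omega) (by omega) (by omega), Finset.sum_mul_sum]
    simp only [Finset.mul_sum]
  rw [Finset.sum_congr rfl step1]
  rw [sum_comm3]
  rw [Finset.sum_comm]
  have step2 : ∀ A ∈ (range (m 2 + 4)) ×ˢ (range (m 2 + 4)),
      (∑ B ∈ (range (m 2 + 4)) ×ˢ (range (m 2 + 4)),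
        ∑ q ∈ (range (m 0 + 1) ×ˢ (range (m 1 + 1) ×ˢ range (m 2 + 1))),
          ((m 0).choose q.1 : ℚ) * ((m 1).choose q.2.1 : ℚ) * ((m 2).choose q.2.2 : ℚ) *
          ((if 1 ≤ A.1 + A.2 ∧ 2 * (A.1 + A.2) - 1 = q.2.2 + s2 then
              N A.1 A.2 * (A.2:ℚ)^(q.1 + s0) * (A.1:ℚ)^(q.2.1 + s1) else 0) *
           (if 1 ≤ B.1 + B.2 ∧ 2 * (B.1 + B.2) - 1 = (m 2 - q.2.2) + t2 then
              N B.1 B.2 * (B.2:ℚ)^((m 0 - q.1) + t0) * (B.1:ℚ)^((m 1 - q.2.1) + t1) else 0)))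
      = ∑ B ∈ (range (m 2 + 4)) ×ˢ (range (m 2 + 4)),
          ((A.2:ℚ)^s0 * (B.2:ℚ)^t0 * ((A.2:ℚ) + (B.2:ℚ))^(m 0)) *
          ((A.1:ℚ)^s1 * (B.1:ℚ)^t1 * ((A.1:ℚ) + (B.1:ℚ))^(m 1)) *
          ((if 1 ≤ A.1 + A.2 ∧ 1 ≤ B.1 + B.2 ∧ 2*((A.1+A.2)+(B.1+B.2)) - 4 = m 2 then
              ((m 2).choose (2*(A.1+A.2) - 1 - s2) : ℚ) else 0) *
            (N A.1 A.2 * N B.1 B.2)) := by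
    intro A _
    apply Finset.sum_congr rfl
    intro B _
    rw [Finset.sum_product]
    have inner : ∀ x, ∑ yz ∈ (range (m 1 + 1) ×ˢ range (m 2 + 1)),
        ((m 0).choose x : ℚ) * ((m 1).choose yz.1 : ℚ) * ((m 2).choose yz.2 : ℚ) *
          ((if 1 ≤ A.1 + A.2 ∧ 2 * (A.1 + A.2) - 1 = yz.2 + s2 then
              N A.1 A.2 * (A.2:ℚ)^(x + s0) * (A.1:ℚ)^(yz.1 + s1) else 0) *
           (if 1 ≤ B.1 + B.2 ∧ 2 * (B.1 + B.2) - 1 = (m 2 - yz.2) + t2 then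
              N B.1 B.2 * (B.2:ℚ)^((m 0 - x) + t0) * (B.1:ℚ)^((m 1 - yz.1) + t1) else 0))
        = ∑ y ∈ range (m 1 + 1), ∑ z ∈ range (m 2 + 1),
            (((m 0).choose x : ℚ) * ((A.2:ℚ)^(x + s0) * (B.2:ℚ)^((m 0 - x) + t0))) *
            (((m 1).choose y : ℚ) * ((A.1:ℚ)^(y + s1) * (B.1:ℚ)^((m 1 - y) + t1))) *
            ((if (1 ≤ A.1 + A.2 ∧ 2 * (A.1 + A.2) - 1 = z + s2) ∧
                 (1 ≤ B.1 + B.2 ∧ 2 * (B.1 + B.2) - 1 = (m 2 - z) + t2) then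
                ((m 2).choose z : ℚ) else 0) * (N A.1 A.2 * N B.1 B.2)) := by
      intro x
      rw [Finset.sum_product]
      apply Finset.sum_congr rfl
      intro y _
      apply Finset.sum_congr rfl
      intro z _
      rw [mul_ite_zero']
      split_ifs with h
      · ring
      · ring
    rw [Finset.sum_congr rfl (fun x _ => inner x)]
    have hfac := sum_factor3 (range (m 0 + 1)) (range (m 1 + 1)) (range (m 2 + 1))
      (fun x => ((m 0).choose x : ℚ) * ((A.2:ℚ)^(x + s0) * (B.2:ℚ)^((m 0 - x) + t0)))
      (fun y => ((m 1).choose y : ℚ) * ((A.1:ℚ)^(y + s1) * (B.1:ℚ)^((m 1 - y) + t1)))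
      (fun z => (if (1 ≤ A.1 + A.2 ∧ 2 * (A.1 + A.2) - 1 = z + s2) ∧
                 (1 ≤ B.1 + B.2 ∧ 2 * (B.1 + B.2) - 1 = (m 2 - z) + t2) then
                ((m 2).choose z : ℚ) else 0) * (N A.1 A.2 * N B.1 B.2))
    rw [hfac, xsum, xsum, ← Finset.sum_mul, zsum _ _ _ _ _ hs2 hst]
  rw [Finset.sum_congr rfl step2]
  rw [SS, Finset.sum_filter]
  conv_lhs => rw [← Finset.sum_product']
  apply Finset.sum_congr rfl
  intro q _
  split_ifs with h
  · ring
  · ring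

lemma regroup (c : ℕ) (F : (ℕ×ℕ) → (ℕ×ℕ) → ℚ) :
    ∑ q ∈ SS c, F q.1 q.2
    = ∑ de ∈ ((range (c+3+2)) ×ˢ (range (c+3+2))).filter
        (fun p => 1 ≤ p.1 + p.2 ∧ 2 * (p.1 + p.2) - 1 = c + 3),
        ∑ p ∈ ((range (de.1+1)) ×ˢ (range (de.2+1))).filter
          (fun p => 1 ≤ p.1 + p.2 ∧ 1 ≤ (de.1 - p.1) + (de.2 - p.2)),
          F p (de.1 - p.1, de.2 - p.2) := by
  rw [Finset.sum_sigma']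
  apply Finset.sum_nbij' (i := fun q => ⟨(q.1.1 + q.2.1, q.1.2 + q.2.2), q.1⟩)
    (j := fun σ => (σ.2, (σ.1.1 - σ.2.1, σ.1.2 - σ.2.2)))
  · intro q hq
    simp only [SS, mem_filter, mem_product, mem_range] at hq
    simp only [Finset.mem_sigma, mem_filter, mem_product, mem_range]
    refine ⟨⟨⟨?_, ?_⟩, ?_, ?_⟩, ⟨?_, ?_⟩, ?_, ?_⟩ <;> omega
  · intro σ hσ
    simp only [Finset.mem_sigma, mem_filter, mem_product, mem_range] at hσ
    simp only [SS, mem_filter, mem_product, mem_range]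
    refine ⟨⟨⟨?_, ?_⟩, ?_, ?_⟩, ?_, ?_, ?_⟩ <;> omega
  · rintro ⟨⟨d1,e1⟩,⟨d2,e2⟩⟩ hq
    have h1 : d1 + d2 - d1 = d2 := by omega
    have h2 : e1 + e2 - e1 = e2 := by omega
    simp only [h1, h2]
  · rintro ⟨⟨d,e⟩,⟨dA,eA⟩⟩ hσ
    simp only [Finset.mem_sigma, mem_filter, mem_product, mem_range] at hσ
    have h1 : dA + (d - dA) = d := by omega
    have h2 : eA + (e - eA) = e := by omega
    simp only [h1, h2]
  · rintro ⟨⟨d1,e1⟩,⟨d2,e2⟩⟩ hq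
    have h1 : d1 + d2 - d1 = d2 := by omega
    have h2 : e1 + e2 - e1 = e2 := by omega
    simp only [h1, h2]


lemma c222 (N : ℕ → ℕ → ℚ) (u : Fin 3 →₀ ℕ) :
    MvPowerSeries.coeff u (mvPDeriv 2 (mvPDeriv 2 (mvPDeriv 2 (GammaP1xP1 N))))
    = gg N (u 0) (u 1) (u 2 + 3) /
      (((u 0).factorial : ℚ) * ((u 1).factorial : ℚ) * ((u 2).factorial : ℚ)) := by
  rw [coeff_D3]; norm_num [Finsupp.add_apply, Finsupp.single_apply, Fin.ext_iff]

lemma c001 (N : ℕ → ℕ → ℚ) (u : Fin 3 →₀ ℕ) :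
    MvPowerSeries.coeff u (mvPDeriv 0 (mvPDeriv 0 (mvPDeriv 1 (GammaP1xP1 N))))
    = gg N (u 0 + 2) (u 1 + 1) (u 2 + 0) /
      (((u 0).factorial : ℚ) * ((u 1).factorial : ℚ) * ((u 2).factorial : ℚ)) := by
  rw [coeff_D3]; norm_num [Finsupp.add_apply, Finsupp.single_apply, Fin.ext_iff]

lemma c122 (N : ℕ → ℕ → ℚ) (u : Fin 3 →₀ ℕ) :
    MvPowerSeries.coeff u (mvPDeriv 1 (mvPDeriv 2 (mvPDeriv 2 (GammaP1xP1 N))))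
    = gg N (u 0 + 0) (u 1 + 1) (u 2 + 2) /
      (((u 0).factorial : ℚ) * ((u 1).factorial : ℚ) * ((u 2).factorial : ℚ)) := by
  rw [coeff_D3]; norm_num [Finsupp.add_apply, Finsupp.single_apply, Fin.ext_iff]

lemma c011 (N : ℕ → ℕ → ℚ) (u : Fin 3 →₀ ℕ) :
    MvPowerSeries.coeff u (mvPDeriv 0 (mvPDeriv 1 (mvPDeriv 1 (GammaP1xP1 N))))
    = gg N (u 0 + 1) (u 1 + 2) (u 2 + 0) /
      (((u 0).factorial : ℚ) * ((u 1).factorial : ℚ) * ((u 2).factorial : ℚ)) := by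
  rw [coeff_D3]; norm_num [Finsupp.add_apply, Finsupp.single_apply, Fin.ext_iff]

lemma c022 (N : ℕ → ℕ → ℚ) (u : Fin 3 →₀ ℕ) :
    MvPowerSeries.coeff u (mvPDeriv 0 (mvPDeriv 2 (mvPDeriv 2 (GammaP1xP1 N))))
    = gg N (u 0 + 1) (u 1 + 0) (u 2 + 2) /
      (((u 0).factorial : ℚ) * ((u 1).factorial : ℚ) * ((u 2).factorial : ℚ)) := by
  rw [coeff_D3]; norm_num [Finsupp.add_apply, Finsupp.single_apply, Fin.ext_iff]

lemma c012 (N : ℕ → ℕ → ℚ) (u : Fin 3 →₀ ℕ) :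
    MvPowerSeries.coeff u (mvPDeriv 0 (mvPDeriv 1 (mvPDeriv 2 (GammaP1xP1 N))))
    = gg N (u 0 + 1) (u 1 + 1) (u 2 + 1) /
      (((u 0).factorial : ℚ) * ((u 1).factorial : ℚ) * ((u 2).factorial : ℚ)) := by
  rw [coeff_D3]; norm_num [Finsupp.add_apply, Finsupp.single_apply, Fin.ext_iff]

lemma c112 (N : ℕ → ℕ → ℚ) (u : Fin 3 →₀ ℕ) :
    MvPowerSeries.coeff u (mvPDeriv 1 (mvPDeriv 1 (mvPDeriv 2 (GammaP1xP1 N))))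
    = gg N (u 0 + 0) (u 1 + 2) (u 2 + 1) /
      (((u 0).factorial : ℚ) * ((u 1).factorial : ℚ) * ((u 2).factorial : ℚ)) := by
  rw [coeff_D3]; norm_num [Finsupp.add_apply, Finsupp.single_apply, Fin.ext_iff]

lemma c002 (N : ℕ → ℕ → ℚ) (u : Fin 3 →₀ ℕ) :
    MvPowerSeries.coeff u (mvPDeriv 0 (mvPDeriv 0 (mvPDeriv 2 (GammaP1xP1 N))))
    = gg N (u 0 + 2) (u 1 + 0) (u 2 + 1) /
      (((u 0).factorial : ℚ) * ((u 1).factorial : ℚ) * ((u 2).factorial : ℚ)) := by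
  rw [coeff_D3]; norm_num [Finsupp.add_apply, Finsupp.single_apply, Fin.ext_iff]

/-- WDVV equation for `ℙ¹×ℙ¹`: if `N` satisfies Kontsevich's recursion, then the third
partial derivatives `Γ_{ijk}` of the quantum potential `Γ` satisfy
`Γ₃₃₃ + Γ₁₁₂·Γ₂₃₃ + Γ₁₂₂·Γ₁₃₃ = Γ₁₂₃·Γ₁₂₃ + Γ₂₂₃·Γ₁₁₃`
(variables `x₁, x₂, x₃` are indexed by `0, 1, 2 : Fin 3`). -/
theorem kontsevich_p1xp1_wdvv (N : ℕ → ℕ → ℚ) (hN : KontsevichRecursionP1xP1 N) :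
    mvPDeriv 2 (mvPDeriv 2 (mvPDeriv 2 (GammaP1xP1 N)))
      + mvPDeriv 0 (mvPDeriv 0 (mvPDeriv 1 (GammaP1xP1 N)))
        * mvPDeriv 1 (mvPDeriv 2 (mvPDeriv 2 (GammaP1xP1 N)))
      + mvPDeriv 0 (mvPDeriv 1 (mvPDeriv 1 (GammaP1xP1 N)))
        * mvPDeriv 0 (mvPDeriv 2 (mvPDeriv 2 (GammaP1xP1 N)))
    = mvPDeriv 0 (mvPDeriv 1 (mvPDeriv 2 (GammaP1xP1 N)))
        * mvPDeriv 0 (mvPDeriv 1 (mvPDeriv 2 (GammaP1xP1 N)))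
      + mvPDeriv 1 (mvPDeriv 1 (mvPDeriv 2 (GammaP1xP1 N)))
        * mvPDeriv 0 (mvPDeriv 0 (mvPDeriv 2 (GammaP1xP1 N))) := by
  obtain ⟨h10, h01, hrec⟩ := hN
  apply MvPowerSeries.ext
  intro m
  rw [map_add, map_add, MvPowerSeries.coeff_mul, MvPowerSeries.coeff_mul, map_add,
    MvPowerSeries.coeff_mul, MvPowerSeries.coeff_mul, c222 N m]
  have hS1 : (∑ p ∈ Finset.HasAntidiagonal.antidiagonal m,
      MvPowerSeries.coeff p.1 (mvPDeriv 0 (mvPDeriv 0 (mvPDeriv 1 (GammaP1xP1 N)))) *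
      MvPowerSeries.coeff p.2 (mvPDeriv 1 (mvPDeriv 2 (mvPDeriv 2 (GammaP1xP1 N)))))
      = ∑ p ∈ Finset.HasAntidiagonal.antidiagonal m,
        (gg N (p.1 0 + 2) (p.1 1 + 1) (p.1 2 + 0) /
          (((p.1 0).factorial : ℚ) * ((p.1 1).factorial : ℚ) * ((p.1 2).factorial : ℚ))) *
        (gg N (p.2 0 + 0) (p.2 1 + 1) (p.2 2 + 2) /
          (((p.2 0).factorial : ℚ) * ((p.2 1).factorial : ℚ) * ((p.2 2).factorial : ℚ))) :=
    Finset.sum_congr rfl (fun p _ => by rw [c001 N p.1, c122 N p.2])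
  have hS2 : (∑ p ∈ Finset.HasAntidiagonal.antidiagonal m,
      MvPowerSeries.coeff p.1 (mvPDeriv 0 (mvPDeriv 1 (mvPDeriv 1 (GammaP1xP1 N)))) *
      MvPowerSeries.coeff p.2 (mvPDeriv 0 (mvPDeriv 2 (mvPDeriv 2 (GammaP1xP1 N)))))
      = ∑ p ∈ Finset.HasAntidiagonal.antidiagonal m,
        (gg N (p.1 0 + 1) (p.1 1 + 2) (p.1 2 + 0) /
          (((p.1 0).factorial : ℚ) * ((p.1 1).factorial : ℚ) * ((p.1 2).factorial : ℚ))) *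
        (gg N (p.2 0 + 1) (p.2 1 + 0) (p.2 2 + 2) /
          (((p.2 0).factorial : ℚ) * ((p.2 1).factorial : ℚ) * ((p.2 2).factorial : ℚ))) :=
    Finset.sum_congr rfl (fun p _ => by rw [c011 N p.1, c022 N p.2])
  have hS3 : (∑ p ∈ Finset.HasAntidiagonal.antidiagonal m,
      MvPowerSeries.coeff p.1 (mvPDeriv 0 (mvPDeriv 1 (mvPDeriv 2 (GammaP1xP1 N)))) *
      MvPowerSeries.coeff p.2 (mvPDeriv 0 (mvPDeriv 1 (mvPDeriv 2 (GammaP1xP1 N)))))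
      = ∑ p ∈ Finset.HasAntidiagonal.antidiagonal m,
        (gg N (p.1 0 + 1) (p.1 1 + 1) (p.1 2 + 1) /
          (((p.1 0).factorial : ℚ) * ((p.1 1).factorial : ℚ) * ((p.1 2).factorial : ℚ))) *
        (gg N (p.2 0 + 1) (p.2 1 + 1) (p.2 2 + 1) /
          (((p.2 0).factorial : ℚ) * ((p.2 1).factorial : ℚ) * ((p.2 2).factorial : ℚ))) :=
    Finset.sum_congr rfl (fun p _ => by rw [c012 N p.1, c012 N p.2])
  have hS4 : (∑ p ∈ Finset.HasAntidiagonal.antidiagonal m,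
      MvPowerSeries.coeff p.1 (mvPDeriv 1 (mvPDeriv 1 (mvPDeriv 2 (GammaP1xP1 N)))) *
      MvPowerSeries.coeff p.2 (mvPDeriv 0 (mvPDeriv 0 (mvPDeriv 2 (GammaP1xP1 N)))))
      = ∑ p ∈ Finset.HasAntidiagonal.antidiagonal m,
        (gg N (p.1 0 + 0) (p.1 1 + 2) (p.1 2 + 1) /
          (((p.1 0).factorial : ℚ) * ((p.1 1).factorial : ℚ) * ((p.1 2).factorial : ℚ))) *
        (gg N (p.2 0 + 2) (p.2 1 + 0) (p.2 2 + 1) /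
          (((p.2 0).factorial : ℚ) * ((p.2 1).factorial : ℚ) * ((p.2 2).factorial : ℚ))) :=
    Finset.sum_congr rfl (fun p _ => by rw [c112 N p.1, c002 N p.2])
  rw [hS1, hS2, hS3, hS4]
  have hD : ((m 0).factorial : ℚ) * ((m 1).factorial : ℚ) * ((m 2).factorial : ℚ) ≠ 0 :=
    mul_ne_zero (mul_ne_zero (Nat.cast_ne_zero.2 (m 0).factorial_ne_zero)
      (Nat.cast_ne_zero.2 (m 1).factorial_ne_zero)) (Nat.cast_ne_zero.2 (m 2).factorial_ne_zero)
  apply mul_left_cancel₀ hD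
  rw [mul_add, mul_add, mul_add]
  have hggdiv : (((m 0).factorial : ℚ) * ((m 1).factorial : ℚ) * ((m 2).factorial : ℚ)) *
      (gg N (m 0) (m 1) (m 2 + 3) /
        (((m 0).factorial : ℚ) * ((m 1).factorial : ℚ) * ((m 2).factorial : ℚ)))
      = gg N (m 0) (m 1) (m 2 + 3) := by
    rw [mul_comm, div_mul_cancel₀ _ hD]
  rw [hggdiv, P_eq N m 2 1 0 0 1 2 (by norm_num) (by norm_num),
    P_eq N m 1 2 0 1 0 2 (by norm_num) (by norm_num),
    P_eq N m 1 1 1 1 1 1 (by norm_num) (by norm_num),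
    P_eq N m 0 2 1 2 0 1 (by norm_num) (by norm_num)]
  have hreg1 := regroup (m 2) (fun A B =>
    ((m 2).choose (2*(A.1+A.2) - 1 - 0) : ℚ) * N A.1 A.2 * N B.1 B.2 *
    (A.2:ℚ)^2 * (A.1:ℚ)^1 * (B.2:ℚ)^0 * (B.1:ℚ)^1 *
    ((A.2:ℚ) + (B.2:ℚ))^(m 0) * ((A.1:ℚ) + (B.1:ℚ))^(m 1))
  have hreg2 := regroup (m 2) (fun A B =>
    ((m 2).choose (2*(A.1+A.2) - 1 - 0) : ℚ) * N A.1 A.2 * N B.1 B.2 *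
    (A.2:ℚ)^1 * (A.1:ℚ)^2 * (B.2:ℚ)^1 * (B.1:ℚ)^0 *
    ((A.2:ℚ) + (B.2:ℚ))^(m 0) * ((A.1:ℚ) + (B.1:ℚ))^(m 1))
  have hreg3 := regroup (m 2) (fun A B =>
    ((m 2).choose (2*(A.1+A.2) - 1 - 1) : ℚ) * N A.1 A.2 * N B.1 B.2 *
    (A.2:ℚ)^1 * (A.1:ℚ)^1 * (B.2:ℚ)^1 * (B.1:ℚ)^1 *
    ((A.2:ℚ) + (B.2:ℚ))^(m 0) * ((A.1:ℚ) + (B.1:ℚ))^(m 1))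
  have hreg4 := regroup (m 2) (fun A B =>
    ((m 2).choose (2*(A.1+A.2) - 1 - 1) : ℚ) * N A.1 A.2 * N B.1 B.2 *
    (A.2:ℚ)^0 * (A.1:ℚ)^2 * (B.2:ℚ)^2 * (B.1:ℚ)^0 *
    ((A.2:ℚ) + (B.2:ℚ))^(m 0) * ((A.1:ℚ) + (B.1:ℚ))^(m 1))
  simp only [] at hreg1 hreg2 hreg3 hreg4
  rw [hreg1, hreg2, hreg3, hreg4, gg]
  rw [← Finset.sum_add_distrib, ← Finset.sum_add_distrib, ← Finset.sum_add_distrib]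
  apply Finset.sum_congr rfl
  rintro ⟨d, e⟩ hde
  simp only [mem_filter, mem_product, mem_range] at hde
  have hde2 : 2 ≤ d + e := by omega
  have hr := hrec d e hde2
  have hc : m 2 = 2 * d + 2 * e - 4 := by omega
  have merge1 : ∀ p ∈ ((Finset.range (d + 1)) ×ˢ (Finset.range (e + 1))).filter
      (fun p => 1 ≤ p.1 + p.2 ∧ 1 ≤ (d - p.1) + (e - p.2)),
      (((m 2).choose (2*(p.1+p.2) - 1 - 0) : ℚ) * N p.1 p.2 * N (d - p.1, e - p.2).1 (d - p.1, e - p.2).2 *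
        (p.2:ℚ)^2 * (p.1:ℚ)^1 * ((d - p.1, e - p.2).2:ℚ)^0 * ((d - p.1, e - p.2).1:ℚ)^1 *
        ((p.2:ℚ) + ((d - p.1, e - p.2).2:ℚ))^(m 0) * ((p.1:ℚ) + ((d - p.1, e - p.2).1:ℚ))^(m 1)) +
      (((m 2).choose (2*(p.1+p.2) - 1 - 0) : ℚ) * N p.1 p.2 * N (d - p.1, e - p.2).1 (d - p.1, e - p.2).2 *
        (p.2:ℚ)^1 * (p.1:ℚ)^2 * ((d - p.1, e - p.2).2:ℚ)^1 * ((d - p.1, e - p.2).1:ℚ)^0 *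
        ((p.2:ℚ) + ((d - p.1, e - p.2).2:ℚ))^(m 0) * ((p.1:ℚ) + ((d - p.1, e - p.2).1:ℚ))^(m 1))
      = (((2 * d + 2 * e - 4).choose (2 * p.1 + 2 * p.2 - 1) : ℚ) * (p.1 : ℚ) * (p.2 : ℚ) *
          ((p.1 : ℚ) * ((e - p.2 : ℕ) : ℚ) + (p.2 : ℚ) * ((d - p.1 : ℕ) : ℚ)) *
          N p.1 p.2 * N (d - p.1) (e - p.2)) * ((e:ℚ)^(m 0) * (d:ℚ)^(m 1)) := by
    intro p hp
    simp only [mem_filter, mem_product, mem_range] at hp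
    have e1 : (p.2:ℚ) + ((e - p.2 : ℕ):ℚ) = (e:ℚ) := by
      rw [← Nat.cast_add]; congr 1; omega
    have e2 : (p.1:ℚ) + ((d - p.1 : ℕ):ℚ) = (d:ℚ) := by
      rw [← Nat.cast_add]; congr 1; omega
    have e3 : (m 2).choose (2*(p.1+p.2) - 1 - 0) = (2 * d + 2 * e - 4).choose (2 * p.1 + 2 * p.2 - 1) := by
      rw [hc]; congr 1; omega
    simp only []
    rw [e1, e2, e3]
    ring
  have merge2 : ∀ p ∈ ((Finset.range (d + 1)) ×ˢ (Finset.range (e + 1))).filter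
      (fun p => 1 ≤ p.1 + p.2 ∧ 1 ≤ (d - p.1) + (e - p.2)),
      (((m 2).choose (2*(p.1+p.2) - 1 - 1) : ℚ) * N p.1 p.2 * N (d - p.1, e - p.2).1 (d - p.1, e - p.2).2 *
        (p.2:ℚ)^1 * (p.1:ℚ)^1 * ((d - p.1, e - p.2).2:ℚ)^1 * ((d - p.1, e - p.2).1:ℚ)^1 *
        ((p.2:ℚ) + ((d - p.1, e - p.2).2:ℚ))^(m 0) * ((p.1:ℚ) + ((d - p.1, e - p.2).1:ℚ))^(m 1)) +
      (((m 2).choose (2*(p.1+p.2) - 1 - 1) : ℚ) * N p.1 p.2 * N (d - p.1, e - p.2).1 (d - p.1, e - p.2).2 *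
        (p.2:ℚ)^0 * (p.1:ℚ)^2 * ((d - p.1, e - p.2).2:ℚ)^2 * ((d - p.1, e - p.2).1:ℚ)^0 *
        ((p.2:ℚ) + ((d - p.1, e - p.2).2:ℚ))^(m 0) * ((p.1:ℚ) + ((d - p.1, e - p.2).1:ℚ))^(m 1))
      = (((2 * d + 2 * e - 4).choose (2 * p.1 + 2 * p.2 - 2) : ℚ) * (p.1 : ℚ) * ((e - p.2 : ℕ) : ℚ) *
          ((p.1 : ℚ) * ((e - p.2 : ℕ) : ℚ) + (p.2 : ℚ) * ((d - p.1 : ℕ) : ℚ)) *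
          N p.1 p.2 * N (d - p.1) (e - p.2)) * ((e:ℚ)^(m 0) * (d:ℚ)^(m 1)) := by
    intro p hp
    simp only [mem_filter, mem_product, mem_range] at hp
    have e1 : (p.2:ℚ) + ((e - p.2 : ℕ):ℚ) = (e:ℚ) := by
      rw [← Nat.cast_add]; congr 1; omega
    have e2 : (p.1:ℚ) + ((d - p.1 : ℕ):ℚ) = (d:ℚ) := by
      rw [← Nat.cast_add]; congr 1; omega
    have e3 : (m 2).choose (2*(p.1+p.2) - 1 - 1) = (2 * d + 2 * e - 4).choose (2 * p.1 + 2 * p.2 - 2) := by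
      rw [hc]; congr 1; omega
    simp only []
    rw [e1, e2, e3]
    ring
  rw [add_assoc, ← Finset.sum_add_distrib, Finset.sum_congr rfl merge1,
    ← Finset.sum_add_distrib, Finset.sum_congr rfl merge2,
    ← Finset.sum_mul, ← Finset.sum_mul]
  linear_combination ((e:ℚ)^(m 0) * (d:ℚ)^(m 1)) * hr
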